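/- Let G be a digraph, k ≥ 1 a natural number, and s, t vertices with d := dist_G(s,t) < ∞. Suppose that no simple s-to-t path in G has length ℓ with d + k ≤ ℓ ≤ d + 3k − 1. Let P be a simple s-to-t path of length at least d + k, of minimum length among all such paths. Let p be the smallest natural number such that at least two distinct vertices of P lie in the layer L_p = {v : dist_G(s,v) = p}, and let x and y be the first and second vertices of P in L_p. Then the subpath P[x→y] has length at least 2k. -/

import Mathlib

variable {V : Type*}

/-- `w` is a directed walk from `u` to `v` in the digraph with arc relation `A`:
a nonempty list of vertices whose consecutive members are joined by arcs,
starting at `u` and ending at `v`. -/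
def IsDiWalk (A : V → V → Prop) (u v : V) (w : List V) : Prop :=
  w.Chain' A ∧ w.head? = some u ∧ w.getLast? = some v

/-- The length (number of arcs) of a walk represented as its list of vertices. -/
def walkLength (w : List V) : ℕ :=
  w.length - 1

/-- `w` is a simple directed path from `u` to `v`. -/
def IsDiPath (A : V → V → Prop) (u v : V) (w : List V) : Prop :=
  IsDiWalk A u v w ∧ w.Nodup

/-- Directed distance from `u` to `v`: the minimum length of a directed
`u`-to-`v` walk, or `⊤` if `v` is unreachable from `u`. -/
noncomputable def ddist (A : V → V → Prop) (u v : V) : ℕ∞ :=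
  ⨅ (w : List V) (_ : IsDiWalk A u v w), (walkLength w : ℕ∞)

/-- The internal (non-endpoint) vertices of a path represented as a list. -/
def internalVerts (w : List V) : List V :=
  w.tail.dropLast

/-- Two paths are internally vertex-disjoint if no internal vertex of either
lies on the other. -/
def InternallyDisjoint (w₁ w₂ : List V) : Prop :=
  (∀ a ∈ internalVerts w₁, a ∉ w₂) ∧ (∀ a ∈ internalVerts w₂, a ∉ w₁)

/-- All vertices of `w` lie in the induced subgraph `G_{≥p}` (with respect to
source `s`), i.e. have distance at least `p` from `s`. A path satisfying
`IsDiPath A x y w` together with `InGeq A s p w` is exactly a path of the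
induced subgraph of `G` on `{v : dist_G(s,v) ≥ p}`. -/
def InGeq (A : V → V → Prop) (s : V) (p : ℕ) (w : List V) : Prop :=
  ∀ a ∈ w, (p : ℕ∞) ≤ ddist A s a

section helpers


variable {A : V → V → Prop}

lemma diwalk_length_pos {u v : V} {w : List V} (h : IsDiWalk A u v w) : 0 < w.length := by
  rcases h with ⟨-, h2, -⟩
  cases w with
  | nil => simp at h2
  | cons a l => simp

lemma diwalk_head {u v : V} {w : List V} (h : IsDiWalk A u v w)
    (hl : 0 < w.length) : w[0] = u := by
  rcases h with ⟨-, h2, -⟩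
  rw [List.head?_eq_getElem?, List.getElem?_eq_getElem hl] at h2
  exact Option.some_injective _ h2

lemma diwalk_last {u v : V} {w : List V} (h : IsDiWalk A u v w)
    (hl : w.length - 1 < w.length) : w[w.length - 1] = v := by
  rcases h with ⟨-, -, h3⟩
  rw [List.getLast?_eq_getElem?, List.getElem?_eq_getElem hl] at h3
  exact Option.some_injective _ h3

lemma ddist_le_walk {u v : V} {w : List V} (h : IsDiWalk A u v w) :
    ddist A u v ≤ (walkLength w : ℕ∞) := by
  exact iInf_le_of_le w (iInf_le _ h)

lemma exists_walk_eq {u v : V} {n : ℕ} (h : ddist A u v = (n : ℕ∞)) :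
    ∃ w, IsDiWalk A u v w ∧ walkLength w = n := by
  by_contra hc
  push_neg at hc
  have h1 : ((n + 1 : ℕ) : ℕ∞) ≤ ddist A u v := by
    refine le_iInf fun w => le_iInf fun hw => ?_
    have h1 : (n : ℕ∞) ≤ (walkLength w : ℕ∞) := h ▸ ddist_le_walk hw
    have h2 : walkLength w ≠ n := hc w hw
    have : n + 1 ≤ walkLength w := by
      have : n ≤ walkLength w := by exact_mod_cast h1
      omega
    exact_mod_cast this
  rw [h] at h1
  have : n + 1 ≤ n := by exact_mod_cast h1
  omega

lemma ddist_self (u : V) : ddist A u u = 0 := by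
  have h : IsDiWalk A u u [u] := ⟨List.isChain_singleton u, rfl, rfl⟩
  have := ddist_le_walk h
  simpa [walkLength] using this

lemma diwalk_take {u v : V} {w : List V} (h : IsDiWalk A u v w) {n : ℕ}
    (hn : n < w.length) : IsDiWalk A u w[n] (w.take (n + 1)) := by
  obtain ⟨hc, hh, hl⟩ := h
  have hlen : (w.take (n + 1)).length = n + 1 := by
    rw [List.length_take]; omega
  refine ⟨hc.take _, ?_, ?_⟩
  · rw [List.head?_eq_getElem?, List.getElem?_eq_getElem (by omega : 0 < (w.take (n+1)).length)]
    rw [List.getElem_take]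
    rw [List.head?_eq_getElem?, List.getElem?_eq_getElem (by omega : 0 < w.length)] at hh
    exact hh
  · rw [List.getLast?_eq_getElem?, hlen]
    rw [List.getElem?_eq_getElem (by omega : n + 1 - 1 < (w.take (n+1)).length)]
    rw [List.getElem_take]
    congr 1

lemma diwalk_drop {u v : V} {w : List V} (h : IsDiWalk A u v w) {n : ℕ}
    (hn : n < w.length) : IsDiWalk A w[n] v (w.drop n) := by
  obtain ⟨hc, hh, hl⟩ := h
  have hlen : (w.drop n).length = w.length - n := List.length_drop
  have hpos : 0 < (w.drop n).length := by omega
  refine ⟨hc.drop _, ?_, ?_⟩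
  · rw [List.head?_eq_getElem?, List.getElem?_eq_getElem hpos, List.getElem_drop]
    congr 1
  · rw [List.getLast?_eq_getElem?, List.getElem?_eq_getElem (by omega : (w.drop n).length - 1 < (w.drop n).length)]
    rw [List.getElem_drop]
    rw [List.getLast?_eq_getElem?, List.getElem?_eq_getElem (by omega : w.length - 1 < w.length)] at hl
    convert hl using 3
    omega

lemma diwalk_append {u v z : V} {w₁ w₂ : List V} (h₁ : IsDiWalk A u v w₁)
    (h₂ : IsDiWalk A v z w₂) :
    IsDiWalk A u z (w₁ ++ w₂.tail) ∧
      walkLength (w₁ ++ w₂.tail) = walkLength w₁ + walkLength w₂ := by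
  have hp1 := diwalk_length_pos h₁
  have hp2 := diwalk_length_pos h₂
  obtain ⟨hc1, hh1, hl1⟩ := h₁
  obtain ⟨hc2, hh2, hl2⟩ := h₂
  match w₂, hp2 with
  | [a], _ =>
    have ha : a = v := by simpa using hh2
    have haz : a = z := by simpa using hl2
    refine ⟨⟨?_, ?_, ?_⟩, ?_⟩
    · simpa using hc1
    · simpa using hh1
    · simpa [← haz, ha] using hl1
    · simp [walkLength]
  | a :: b :: r, _ =>
    have ha : a = v := by simpa using hh2
    refine ⟨⟨?_, ?_, ?_⟩, ?_⟩
    · rw [List.Chain', List.isChain_append]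
      refine ⟨hc1, List.IsChain.tail hc2, ?_⟩
      intro p hp q hq
      simp only [List.tail_cons] at hq
      rw [hl1] at hp
      simp only [Option.mem_def, Option.some_inj] at hp
      have hq' : q = b := by
        rw [List.head?_eq_getElem?] at hq
        simp at hq
        exact hq.symm ▸ rfl
      subst hp
      rw [hq']
      have := List.isChain_cons_cons.mp (ha ▸ hc2)
      exact this.1
    · rw [List.head?_append]
      rw [hh1]
      rfl
    · rw [List.getLast?_append]
      simp only [List.tail_cons]
      rw [← List.getLast?_cons_cons (a := a)]
      rw [hl2]
      rfl
    · simp only [walkLength, List.length_append, List.length_cons, List.length_tail]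
      omega

lemma ddist_le_of_walk_from {A : V → V → Prop} {s u v : V} {q : ℕ}
    (hq : ddist A s u = (q : ℕ∞)) {w : List V} (hw : IsDiWalk A u v w) :
    ddist A s v ≤ ((q + walkLength w : ℕ) : ℕ∞) := by
  obtain ⟨w₀, hw₀, hlen₀⟩ := exists_walk_eq hq
  obtain ⟨hwalk, hlen⟩ := diwalk_append hw₀ hw
  have := ddist_le_walk hwalk
  rw [hlen, hlen₀] at this
  exact_mod_cast this

lemma ivt_aux (f : ℕ → ℕ) (h0 : f 0 = 0) (M : ℕ)
    (hstep : ∀ n < M, f (n + 1) ≤ f n + 1) (q : ℕ) (hq : q ≤ f M) :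
    ∃ n ≤ M, f n = q := by
  induction M with
  | zero => exact ⟨0, le_refl 0, by omega⟩
  | succ M ih =>
    by_cases hq2 : q ≤ f M
    · obtain ⟨n, hn, he⟩ := ih (fun n hn => hstep n (by omega)) hq2
      exact ⟨n, by omega, he⟩
    · have := hstep M (by omega)
      exact ⟨M + 1, le_refl _, by omega⟩

end helpers

/-- suppose no simple `s`-to-`t` path has length `ℓ` with
`d + k ≤ ℓ ≤ d + 3k − 1` (`d = dist_G(s,t) < ∞`, `k ≥ 1`), and `P` is a
shortest simple `s`-to-`t` path among those of length at least `d + k`. With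
`p`, `x`, `y` as in the layer analysis, the subpath `P[x→y]` has length at
least `2k`. -/
theorem stmt11 [DecidableEq V] (A : V → V → Prop) (k : ℕ) (hk : 1 ≤ k)
    (s t : V) (d : ℕ) (hd : ddist A s t = (d : ℕ∞))
    (hgap : ∀ Q : List V, IsDiPath A s t Q →
      ¬ (d + k ≤ walkLength Q ∧ walkLength Q ≤ d + 3 * k - 1))
    (P : List V) (hP : IsDiPath A s t P) (hPlen : d + k ≤ walkLength P)
    (hPmin : ∀ Q : List V, IsDiPath A s t Q → d + k ≤ walkLength Q →
      walkLength P ≤ walkLength Q)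
    (p : ℕ)
    (hp : ∃ u ∈ P, ∃ v ∈ P, u ≠ v ∧ ddist A s u = (p : ℕ∞) ∧ ddist A s v = (p : ℕ∞))
    (hpmin : ∀ q : ℕ, q < p →
      ¬ ∃ u ∈ P, ∃ v ∈ P, u ≠ v ∧ ddist A s u = (q : ℕ∞) ∧ ddist A s v = (q : ℕ∞))
    (x : V) (hxP : x ∈ P) (hxp : ddist A s x = (p : ℕ∞))
    (hxfirst : ∀ z ∈ P.take (P.idxOf x), ddist A s z ≠ (p : ℕ∞))
    (y : V) (hyP : y ∈ P) (hyp : ddist A s y = (p : ℕ∞))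
    (hxy : P.idxOf x < P.idxOf y)
    (hysecond : ∀ z ∈ P.take (P.idxOf y), z ≠ x → ddist A s z ≠ (p : ℕ∞)) :
    2 * k ≤ walkLength ((P.drop (P.idxOf x)).take (P.idxOf y - P.idxOf x + 1)) := by
  classical
  obtain ⟨hPwalk, hPnd⟩ := hP
  set N := P.length with hN
  have hNpos : 0 < N := diwalk_length_pos hPwalk
  set i := P.idxOf x with hi
  set j := P.idxOf y with hj
  have hiP : i < N := List.idxOf_lt_length_iff.mpr hxP
  have hjP : j < N := List.idxOf_lt_length_iff.mpr hyP
  have Pi : P[i]'hiP = x := List.getElem_idxOf hiP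
  have Pj : P[j]'hjP = y := List.getElem_idxOf hjP
  have hs0 : P[0]'hNpos = s := diwalk_head hPwalk hNpos
  -- reduce the goal to `2 * k ≤ j - i`
  have hgoal : walkLength ((P.drop i).take (j - i + 1)) = j - i := by
    unfold walkLength
    rw [List.length_take, List.length_drop]
    omega
  rw [hgoal]
  by_contra hm
  push_neg at hm
  -- the length of P is at least d + 3k
  have hL : walkLength P = N - 1 := rfl
  have hgapP := hgap P ⟨hPwalk, hPnd⟩
  push_neg at hgapP
  have hL3 : d + 3 * k ≤ N - 1 := by
    have := hgapP (hL ▸ hPlen)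
    rw [hL] at this
    omega
  -- the layer function along P
  set f : ℕ → ℕ := fun n => (ddist A s (P.getD n s)).toNat with hf
  have hdle : ∀ n (hn : n < N), ddist A s (P[n]'hn) ≤ (n : ℕ∞) := by
    intro n hn
    have ht := diwalk_take hPwalk hn
    have h2 := ddist_le_walk ht
    have hwl : walkLength (P.take (n + 1)) = n := by
      unfold walkLength; rw [List.length_take]; omega
    rwa [hwl] at h2
  have hfin : ∀ n (hn : n < N), (f n : ℕ∞) = ddist A s (P[n]'hn) := by
    intro n hn
    rw [hf]
    simp only
    rw [List.getD_eq_getElem P s hn]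
    exact ENat.coe_toNat (ne_top_of_le_ne_top (by simp) (hdle n hn))
  have h0 : f 0 = 0 := by
    have h1 := hfin 0 hNpos
    rw [hs0, ddist_self] at h1
    exact_mod_cast h1
  have hstep : ∀ n, n + 1 < N → f (n + 1) ≤ f n + 1 := by
    intro n hn
    have harc : A (P[n]'(by omega)) (P[n+1]'hn) := by
      have h1 := List.isChain_iff_getElem.mp hPwalk.1 n (by omega)
      simpa using h1
    have hwalk2 : IsDiWalk A (P[n]'(by omega)) (P[n+1]'hn) [P[n]'(by omega), P[n+1]'hn] := by
      exact ⟨List.isChain_pair.mpr harc, rfl, rfl⟩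
    have hq : ddist A s (P[n]'(by omega)) = ((f n : ℕ) : ℕ∞) := (hfin n (by omega)).symm
    have h2 := ddist_le_of_walk_from hq hwalk2
    have hwl : walkLength [P[n]'(by omega), P[n+1]'hn] = 1 := rfl
    rw [hwl, ← hfin (n + 1) hn] at h2
    exact_mod_cast h2
  have hfi : f i = p := by
    have h1 := hfin i hiP; rw [Pi, hxp] at h1; exact_mod_cast h1
  have hfj : f j = p := by
    have h1 := hfin j hjP; rw [Pj, hyp] at h1; exact_mod_cast h1
  -- every vertex strictly before x lies in a layer < p
  have hfirstlt : ∀ n, n < i → f n < p := by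
    intro n hn
    by_contra hge
    push_neg at hge
    obtain ⟨m', hm', hfm'⟩ := ivt_aux f h0 n (fun r hr => hstep r (by omega)) p hge
    have hm'N : m' < N := by omega
    have hmem : P[m']'hm'N ∈ P.take i := by
      have hlt : m' < (P.take i).length := by rw [List.length_take]; omega
      have he : (P.take i)[m']'hlt = P[m']'hm'N := List.getElem_take
      exact he ▸ List.getElem_mem hlt
    refine hxfirst _ hmem ?_
    rw [← hfin m' hm'N]
    exact_mod_cast hfm'
  -- at most one vertex of P per layer below p
  have huniq : ∀ q, q < p → ∀ n, ∀ (hn : n < N), ∀ n', ∀ (hn' : n' < N),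
      f n = q → f n' = q → n = n' := by
    intro q hq n hn n' hn' h1 h2
    by_contra hne
    refine hpmin q hq ⟨P[n]'hn, List.getElem_mem hn, P[n']'hn', List.getElem_mem hn', ?_, ?_, ?_⟩
    · intro he; exact hne (hPnd.getElem_inj_iff.mp he)
    · rw [← hfin n hn]; exact_mod_cast h1
    · rw [← hfin n' hn']; exact_mod_cast h2
  -- the index of x equals p
  have hip : i = p := by
    have h1 : (p : ℕ∞) ≤ (i : ℕ∞) := by rw [← hxp, ← Pi]; exact hdle i hiP
    have hpi : p ≤ i := by exact_mod_cast h1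
    have h2 : i ≤ p := by
      have hc := Finset.card_le_card_of_injOn f
        (s := Finset.range i) (t := Finset.range p)
        (fun n hn => Finset.mem_range.mpr (hfirstlt n (Finset.mem_range.mp hn)))
        (fun n hn n' hn' he => by
          have hn1 := Finset.mem_range.mp hn
          have hn1' := Finset.mem_range.mp hn'
          exact huniq (f n) (hfirstlt n hn1) n (by omega) n' (by omega) rfl he.symm)
      simpa using hc
    omega
  -- a shortest walk R from s to y
  obtain ⟨R, hR, hRlen⟩ := exists_walk_eq hyp
  have hRpos : 0 < R.length := diwalk_length_pos hR
  have hRN : R.length = p + 1 := by unfold walkLength at hRlen; omega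
  have hRlast : R[p]'(by omega) = y := by
    have h3 := hR.2.2
    rw [List.getLast?_eq_getElem?, List.getElem?_eq_getElem (by omega : R.length - 1 < R.length)] at h3
    have h4 : R[R.length - 1]'(by omega) = y := Option.some_injective _ h3
    convert h4 using 2
    omega
  have hRdist : ∀ r (hr : r < R.length), ddist A s (R[r]'hr) = (r : ℕ∞) := by
    intro r hr
    have hle : ddist A s (R[r]'hr) ≤ (r : ℕ∞) := by
      have ht := diwalk_take hR hr
      have h2 := ddist_le_walk ht
      have hwl : walkLength (R.take (r + 1)) = r := by
        unfold walkLength; rw [List.length_take]; omega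
      rwa [hwl] at h2
    have hne : ddist A s (R[r]'hr) ≠ ⊤ := ne_top_of_le_ne_top (by simp) hle
    set q := (ddist A s (R[r]'hr)).toNat with hqdef
    have hq : ddist A s (R[r]'hr) = (q : ℕ∞) := (ENat.coe_toNat hne).symm
    have hqr : q ≤ r := by rw [hq] at hle; exact_mod_cast hle
    rcases eq_or_lt_of_le hqr with he | hlt
    · rw [hq, he]
    · exfalso
      have hdrop := diwalk_drop hR hr
      have hd2 := ddist_le_of_walk_from hq hdrop
      rw [hyp] at hd2
      have hwl : walkLength (R.drop r) = R.length - r - 1 := by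
        unfold walkLength; rw [List.length_drop]
      rw [hwl] at hd2
      have h5 : p ≤ q + (R.length - r - 1) := by exact_mod_cast hd2
      omega
  have hRnd : R.Nodup := by
    rw [List.nodup_iff_injective_get]
    intro a b hab
    simp only [List.get_eq_getElem] at hab
    have h1 := hRdist a.1 a.2
    have h2 := hRdist b.1 b.2
    rw [hab, h2] at h1
    have : (b.1 : ℕ) = a.1 := by exact_mod_cast h1
    exact Fin.ext this.symm
  -- the shortcut path Q
  set D := P.drop (j + 1) with hD
  have hDlen : D.length = N - (j + 1) := List.length_drop
  set Q := R ++ D with hQdef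
  have hQchain : Q.Chain' A := by
    rw [hQdef, List.Chain', List.isChain_append]
    refine ⟨hR.1, List.IsChain.drop hPwalk.1 _, ?_⟩
    intro a ha b hb
    rw [hR.2.2] at ha
    have ha' : a = y := by
      have := ha
      simp only [Option.mem_def, Option.some_inj] at this
      exact this.symm
    have hDne : D ≠ [] := by intro h; rw [h] at hb; simp at hb
    have hD0 : 0 < D.length := List.length_pos_iff.mpr hDne
    have hj1 : j + 1 < N := by omega
    have hb' : b = P[j+1]'hj1 := by
      rw [List.head?_eq_getElem?, List.getElem?_eq_getElem hD0] at hb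
      have hbe : D[0]'hD0 = b := Option.some_injective _ hb
      rw [← hbe]
      exact List.getElem_drop
    have harc : A (P[j]'hjP) (P[j+1]'hj1) := by
      have h1 := List.isChain_iff_getElem.mp hPwalk.1 j (by omega)
      simpa using h1
    rw [ha', hb', ← Pj]
    exact harc
  have hQhead : Q.head? = some s := by
    rw [hQdef, List.head?_append, hR.2.1]
    rfl
  have hQlast : Q.getLast? = some t := by
    by_cases hj1 : j + 1 < N
    · have hD0 : 0 < D.length := by omega
      have hDne : D ≠ [] := List.length_pos_iff.mp hD0
      rw [hQdef, List.getLast?_append]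
      have hDl : D.getLast? = some t := by
        have hsplit : P.take (j + 1) ++ D = P := List.take_append_drop (j + 1) P
        have h1 : P.getLast? = some t := hPwalk.2.2
        rw [← hsplit, List.getLast?_append] at h1
        cases hD' : D.getLast? with
        | none => exact absurd (List.getLast?_eq_none_iff.mp hD') hDne
        | some a =>
          rw [hD'] at h1
          simpa using h1
      rw [hDl]
      rfl
    · have hD0 : D = [] := by
        rw [hD]
        apply List.drop_eq_nil_of_le
        omega
      rw [hQdef, hD0, List.append_nil, hR.2.2]
      have hyt : y = t := by
        have h1 := diwalk_last hPwalk (by omega : N - 1 < N)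
        rw [← Pj, ← h1]
        congr 1
        omega
      rw [hyt]
  have hQnd : Q.Nodup := by
    rw [hQdef, List.nodup_append]
    refine ⟨hRnd, List.Nodup.sublist (List.drop_sublist _ _) hPnd, ?_⟩
    rintro v hvR _ hvD rfl
    obtain ⟨r, hr, hre⟩ := List.mem_iff_getElem.mp hvR
    obtain ⟨r₂, hr₂, he₂⟩ := List.mem_iff_getElem.mp hvD
    have hr₂N : j + 1 + r₂ < N := by omega
    have hP2 : P[j+1+r₂]'hr₂N = v := by
      rw [← he₂]
      exact List.getElem_drop.symm
    have hdv : ddist A s v = (r : ℕ∞) := hre ▸ hRdist r hr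
    have hrp : r ≤ p := by omega
    rcases eq_or_lt_of_le hrp with he | hlt
    · subst he
      have hvy : v = y := by rw [← hre]; exact hRlast
      have hj2 : j + 1 + r₂ = j := by
        apply hPnd.getElem_inj_iff.mp
        rw [hP2, hvy, Pj]
      omega
    · obtain ⟨n, hn, hfn⟩ := ivt_aux f h0 i (fun r' hr' => hstep r' (by omega)) r
        (by rw [hfi]; omega)
      have hnj : n = j + 1 + r₂ := by
        refine huniq r hlt n (by omega) (j + 1 + r₂) hr₂N hfn ?_
        have h6 := hfin (j + 1 + r₂) hr₂N
        rw [hP2, hdv] at h6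
        exact_mod_cast h6
      omega
  have hQlen : walkLength Q = (N - 1) - (j - i) := by
    unfold walkLength
    rw [hQdef, List.length_append, hRN, hDlen]
    omega
  have hQpath : IsDiPath A s t Q := ⟨⟨hQchain, hQhead, hQlast⟩, hQnd⟩
  have hfin2 := hPmin Q hQpath (by rw [hQlen]; omega)
  rw [hQlen, hL] at hfin2
  omega
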